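/- Let T be the spider tree with center y adjacent to x and to y1,...,y_{n'} (n' ≥ 3), and x adjacent additionally to a leaf x1 (so T is a star K_{1,n'+1} with one edge subdivided appropriately: vertices x1, x, y, y1,...,y_{n'}, edges x1x, xy, yy_i). If n' = 2k+1 is odd, then σ = (x1 x y1 y)·∏_{i=1}^{k}(y_{2i} y_{2i+1}) is a fixed-point-free 2-placement of T with every edge mapping to a pair at distance at most 6, dist(v,σ(v)) ≤ 4 for every leaf v, and every cycle of σ has length at most 5. -/

import Mathlib

open SimpleGraph

/-- The spider tree with vertices x1 = 0, x = 1, y = 2 and y_i = i + 2 for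
i = 1, ..., n' (with n' = 2k+1), edges x1-x, x-y and y-y_i. -/
def spider (k : ℕ) : SimpleGraph (Fin (2 * k + 4)) :=
  SimpleGraph.fromRel (fun a b =>
    ((a : ℕ) = 0 ∧ (b : ℕ) = 1) ∨ ((a : ℕ) = 1 ∧ (b : ℕ) = 2) ∨
      ((a : ℕ) = 2 ∧ 3 ≤ (b : ℕ)))

def fnn (n : ℕ) : ℕ :=
  if n = 0 then 1 else if n = 1 then 3 else if n = 2 then 0 else if n = 3 then 2
  else if n % 2 = 0 then n + 1 else n - 1

lemma fnn_lt {k n : ℕ} (h : n < 2 * k + 4) : fnn n < 2 * k + 4 := by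
  unfold fnn; split_ifs <;> omega

lemma fnn_ne (n : ℕ) : fnn n ≠ n := by unfold fnn; split_ifs <;> omega

lemma fnn_even {n : ℕ} (h4 : 4 ≤ n) (he : n % 2 = 0) : fnn n = n + 1 := by
  unfold fnn; split_ifs <;> omega

lemma fnn_odd {n : ℕ} (h4 : 4 ≤ n) (he : n % 2 = 1) : fnn n = n - 1 := by
  unfold fnn; split_ifs <;> omega

lemma fnn_spec (n : ℕ) : (n = 0 ∧ fnn n = 1) ∨ (n = 1 ∧ fnn n = 3) ∨ (n = 2 ∧ fnn n = 0) ∨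
    (n = 3 ∧ fnn n = 2) ∨ (4 ≤ n ∧ 4 ≤ fnn n) := by
  unfold fnn; split_ifs <;> omega

lemma fnn_fnn2 {n : ℕ} (h : 4 ≤ n) : fnn (fnn n) = n := by
  rcases Nat.even_or_odd n with he | ho
  · have hn : n % 2 = 0 := Nat.even_iff.mp he
    rw [fnn_even h hn, fnn_odd (by omega) (by omega)]; omega
  · have hn : n % 2 = 1 := Nat.odd_iff.mp ho
    rw [fnn_odd h hn, fnn_even (by omega) (by omega)]; omega

lemma fnn_fnn (n : ℕ) : fnn (fnn (fnn (fnn n))) = n := by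
  rcases Nat.lt_or_ge n 4 with h | h
  · interval_cases n <;> rfl
  · rw [fnn_fnn2 h, fnn_fnn2 h]

def fA (k : ℕ) (v : Fin (2 * k + 4)) : Fin (2 * k + 4) := ⟨fnn v.val, fnn_lt v.isLt⟩

noncomputable def sig (k : ℕ) : Equiv.Perm (Fin (2 * k + 4)) :=
  Equiv.ofBijective (fA k)
    (Finite.injective_iff_bijective.mp
      (Function.LeftInverse.injective (g := fun v => fA k (fA k (fA k v)))
        (fun v => Fin.ext (fnn_fnn v.val))))

lemma sig_apply (k : ℕ) (v : Fin (2 * k + 4)) : sig k v = ⟨fnn v.val, fnn_lt v.isLt⟩ := rfl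

lemma sig_pow4 (k : ℕ) (v : Fin (2 * k + 4)) : ((sig k) ^ 4) v = v := by
  show (sig k) ((sig k) ((sig k) ((sig k) v))) = v
  simp only [sig_apply]
  exact Fin.ext (fnn_fnn v.val)

lemma spider_adj (k : ℕ) (u v : Fin (2 * k + 4)) :
    (spider k).Adj u v ↔
      ((u : ℕ) = 0 ∧ (v : ℕ) = 1) ∨ ((u : ℕ) = 1 ∧ (v : ℕ) = 0) ∨
      ((u : ℕ) = 1 ∧ (v : ℕ) = 2) ∨ ((u : ℕ) = 2 ∧ (v : ℕ) = 1) ∨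
      ((u : ℕ) = 2 ∧ 3 ≤ (v : ℕ)) ∨ ((v : ℕ) = 2 ∧ 3 ≤ (u : ℕ)) := by
  simp only [spider, fromRel_adj, ne_eq, Fin.ext_iff]
  omega

lemma walk_to_two (k : ℕ) (v : Fin (2 * k + 4)) :
    ∃ p : (spider k).Walk v ⟨2, by omega⟩, p.length ≤ 2 := by
  rcases Nat.lt_or_ge v.val 3 with h | h
  · interval_cases hv : (v : ℕ)
    · refine ⟨Walk.cons ((spider_adj k v (⟨1, by omega⟩ : Fin (2*k+4))).mpr
          (Or.inl ⟨hv, rfl⟩))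
        (Walk.cons ((spider_adj k _ _).mpr (Or.inr (Or.inr (Or.inl ⟨rfl, rfl⟩)))) Walk.nil),
        Nat.le_of_eq rfl⟩
    · refine ⟨Walk.cons ((spider_adj k v _).mpr (Or.inr (Or.inr (Or.inl ⟨hv, rfl⟩))))
        Walk.nil, by simp⟩
    · have hv0 : v = ⟨2, by omega⟩ := Fin.ext hv
      exact ⟨Walk.nil.copy hv0.symm rfl, by simp⟩
  · refine ⟨Walk.cons ((spider_adj k v _).mpr
      (Or.inr (Or.inr (Or.inr (Or.inr (Or.inr ⟨rfl, h⟩)))))) Walk.nil, by simp⟩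

lemma dist_le_four (k : ℕ) (u v : Fin (2 * k + 4)) : (spider k).dist u v ≤ 4 := by
  obtain ⟨p, hp⟩ := walk_to_two k u
  obtain ⟨q, hq⟩ := walk_to_two k v
  have := SimpleGraph.dist_le (p.append q.reverse)
  simp only [Walk.length_append, Walk.length_reverse] at this
  omega

lemma sig_zpow (k : ℕ) (v : Fin (2 * k + 4)) (i : ℤ) :
    ∃ j : ℕ, j < 4 ∧ ((sig k) ^ i) v = ((sig k) ^ j) v := by
  have key : ∀ q : ℤ, (((sig k) ^ (4 : ℤ)) ^ q) v = v := by
    intro q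
    have h4 : ((sig k) ^ (4 : ℤ)) v = v := by
      rw [show ((4:ℤ)) = ((4:ℕ) : ℤ) by norm_num, zpow_natCast]
      exact sig_pow4 k v
    exact Equiv.Perm.zpow_apply_eq_self_of_apply_eq_self h4 q
  refine ⟨(i % 4).toNat, by omega, ?_⟩
  have hmod : ((i % 4).toNat : ℤ) = i % 4 := Int.toNat_of_nonneg (by omega)
  calc ((sig k) ^ i) v = ((sig k) ^ (i % 4 + 4 * (i / 4))) v := by
        rw [show i % 4 + 4 * (i / 4) = i by omega]
    _ = ((sig k) ^ (i % 4)) (((sig k) ^ (4 * (i / 4))) v) := by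
        rw [zpow_add]; rfl
    _ = ((sig k) ^ (i % 4)) v := by
        rw [zpow_mul]; rw [key (i / 4)]
    _ = ((sig k) ^ (i % 4).toNat) v := by rw [← zpow_natCast, hmod]

theorem stmt11 (k : ℕ) (hk : 1 ≤ k) :
    ∃ σ : Equiv.Perm (Fin (2 * k + 4)),
      -- σ is (x1 x y1 y)·∏ (y_{2i} y_{2i+1}) : x1→x, x→y1, y1→y, y→x1, y_{2i}↔y_{2i+1}
      (σ ⟨0, by omega⟩ = ⟨1, by omega⟩ ∧ σ ⟨1, by omega⟩ = ⟨3, by omega⟩ ∧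
        σ ⟨3, by omega⟩ = ⟨2, by omega⟩ ∧ σ ⟨2, by omega⟩ = ⟨0, by omega⟩ ∧
        ∀ i (_ : 1 ≤ i) (_ : i ≤ k),
          σ ⟨2 * i + 2, by omega⟩ = ⟨2 * i + 3, by omega⟩ ∧
            σ ⟨2 * i + 3, by omega⟩ = ⟨2 * i + 2, by omega⟩) ∧
      (∀ v, σ v ≠ v) ∧
      (∀ u v, (spider k).Adj u v → ¬ (spider k).Adj (σ u) (σ v)) ∧
      (∀ u v, (spider k).Adj u v → (spider k).dist (σ u) (σ v) ≤ 6) ∧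
      (∀ v, (∃! w, (spider k).Adj v w) → (spider k).dist v (σ v) ≤ 4) ∧
      (∀ v, (σ.cycleOf v).support.card ≤ 5) := by
  refine ⟨sig k, ⟨?_, ?_, ?_, ?_, ?_⟩, ?_, ?_, ?_, ?_, ?_⟩
  · exact Fin.ext (by rfl)
  · exact Fin.ext (by rfl)
  · exact Fin.ext (by rfl)
  · exact Fin.ext (by rfl)
  · intro i h1 h2
    constructor
    · refine Fin.ext ?_
      show fnn (2 * i + 2) = 2 * i + 3
      exact fnn_even (by omega) (by omega)
    · refine Fin.ext ?_
      show fnn (2 * i + 3) = 2 * i + 2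
      rw [fnn_odd (by omega) (by omega)]
      omega
  · intro v
    rw [sig_apply]
    intro h
    exact fnn_ne v.val (congrArg Fin.val h)
  · intro u v huv
    rw [spider_adj] at huv
    rw [sig_apply, sig_apply, spider_adj]
    simp only
    have hu := fnn_spec u.val
    have hv := fnn_spec v.val
    omega
  · intro u v _
    calc (spider k).dist _ _ ≤ 4 := dist_le_four k _ _
      _ ≤ 6 := by omega
  · intro v _
    exact dist_le_four k _ _
  · intro v
    have hsub : ((sig k).cycleOf v).support ⊆
        {v, sig k v, ((sig k) ^ 2) v, ((sig k) ^ 3) v} := by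
      intro y hy
      rw [Equiv.Perm.mem_support_cycleOf_iff] at hy
      obtain ⟨⟨i, hi⟩, -⟩ := hy
      obtain ⟨j, hj4, hj⟩ := sig_zpow k v i
      rw [hj] at hi
      interval_cases j <;> simp_all [pow_succ, Finset.mem_insert]
    calc ((sig k).cycleOf v).support.card ≤ _ := Finset.card_le_card hsub
      _ ≤ 5 := by
        refine le_trans (Finset.card_insert_le _ _) ?_
        refine le_trans (Nat.add_le_add_right (Finset.card_insert_le _ _) 1) ?_
        refine le_trans (Nat.add_le_add_right (Nat.add_le_add_right
          (Finset.card_insert_le _ _) 1) 1) ?_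
        simp
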